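/- arXiv:1103.4946 — 3 statements merged into one kernel-verified Lean document; each statement's English description precedes it below -/
import Mathlib

section
/- Over the field ℚ(t), the polynomial p(X) = (8t³+12t²+8t+4)X⁴ - (4t⁵+6t⁴-12t³-32t²-22t-12)X³ - (12t⁵+17t⁴-4t³-40t²-27t-14)X² - (13t⁵+9t⁴-9t³-48t²-34t-12)X - 4t⁵+3t⁴+13t³+32t²+25t+10 is irreducible of degree 4. -/
open Polynomial

namespace Stmt9Aux

instance : Fact (Nat.Prime 17) := ⟨by norm_num⟩

lemma isUnit_of_natDeg_zero {F : Type*} [Field F] {f : F[X]} (hf : f ≠ 0)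
    (h : f.natDegree = 0) : IsUnit f := by
  obtain ⟨x, hx⟩ := Polynomial.natDegree_eq_zero.mp h
  subst hx
  exact Polynomial.isUnit_C.mpr (isUnit_iff_ne_zero.mpr (by simpa using hf))

lemma root_of_natDeg_one {F : Type*} [Field F] {f : F[X]} (h : f.natDegree = 1) :
    ∃ x, f.eval x = 0 := by
  have h1 := Polynomial.eq_X_add_C_of_natDegree_le_one h.le
  have hc : f.coeff 1 ≠ 0 := by
    intro h0
    rw [h0] at h1
    simp at h1
    rw [h1] at h
    simp [Polynomial.natDegree_C] at h
  refine ⟨-f.coeff 0 / f.coeff 1, ?_⟩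
  rw [h1]
  simp
  field_simp
  ring

lemma monic_quad_form {F : Type*} [Field F] {f : F[X]} (hm : f.Monic)
    (h : f.natDegree = 2) : f = X ^ 2 + C (f.coeff 1) * X + C (f.coeff 0) := by
  have h3 := f.as_sum_range' 3 (by omega)
  have h2 : f.coeff 2 = 1 := by
    have := hm.leadingCoeff
    rwa [Polynomial.leadingCoeff, h] at this
  rw [Finset.sum_range_succ, Finset.sum_range_succ, Finset.sum_range_succ,
    Finset.sum_range_zero, h2] at h3
  conv_lhs => rw [h3]
  simp only [← Polynomial.C_mul_X_pow_eq_monomial, Polynomial.C_1]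
  ring

noncomputable def wpoly : (ZMod 17)[X] := X ^ 4 + C 14 * X ^ 3 + C 1 * X ^ 2 + C 11 * X + C 13

lemma wpoly_monic : wpoly.Monic := by
  unfold wpoly
  monicity!

lemma wpoly_natDegree : wpoly.natDegree = 4 := by
  unfold wpoly
  compute_degree!

lemma wpoly_eval (x : ZMod 17) : wpoly.eval x ≠ 0 := by
  have h : wpoly.eval x = x ^ 4 + 14 * x ^ 3 + x ^ 2 + 11 * x + 13 := by
    simp [wpoly]
  rw [h]
  clear h
  revert x
  decide

def R1 (b c : ZMod 17) : ZMod 17 := 11 - (c * (14 - b) + b * (1 - c - b * (14 - b)))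
def R0 (b c : ZMod 17) : ZMod 17 := 13 - c * (1 - c - b * (14 - b))

lemma no_common_zero : ∀ b c : ZMod 17, ¬(R1 b c = 0 ∧ R0 b c = 0) := by decide

lemma wpoly_div (b c : ZMod 17) :
    wpoly = (X ^ 2 + C b * X + C c) * (X ^ 2 + C (14 - b) * X + C (1 - c - b * (14 - b)))
      + (C (R1 b c) * X + C (R0 b c)) := by
  unfold wpoly R1 R0
  simp only [map_sub, map_add, map_mul, map_one, map_ofNat]
  ring

lemma no_quad_factor {g : (ZMod 17)[X]} (hg : g.Monic) (h2 : g.natDegree = 2) :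
    ¬ g ∣ wpoly := by
  intro hdvd
  set b := g.coeff 1 with hb
  set c := g.coeff 0 with hc
  have hgform : g = X ^ 2 + C b * X + C c := monic_quad_form hg h2
  have hdeg : g.degree = 2 := by rw [Polynomial.degree_eq_natDegree hg.ne_zero, h2]; rfl
  have hrdvd : g ∣ (C (R1 b c) * X + C (R0 b c)) := by
    have := wpoly_div b c
    rw [hgform] at hdvd ⊢
    exact (dvd_add_right ⟨_, rfl⟩).mp (this ▸ hdvd)
  have hr0 : (C (R1 b c) * X + C (R0 b c)) = 0 := by
    apply Polynomial.eq_zero_of_dvd_of_degree_lt hrdvd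
    rw [hdeg]
    exact lt_of_le_of_lt Polynomial.degree_linear_le (by decide)
  have h1 : R1 b c = 0 := by
    have := congrArg (fun q => Polynomial.coeff q 1) hr0
    simpa using this
  have h0 : R0 b c = 0 := by
    have := congrArg (fun q => Polynomial.coeff q 0) hr0
    simpa [Polynomial.coeff_C] using this
  exact no_common_zero b c ⟨h1, h0⟩

lemma wpoly_irred : Irreducible wpoly := by
  constructor
  · exact Polynomial.not_isUnit_of_natDegree_pos _ (by rw [wpoly_natDegree]; norm_num)
  · intro f g hfg
    by_contra hcon
    push_neg at hcon
    obtain ⟨hf, hg⟩ := hcon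
    have hf0 : f ≠ 0 := by rintro rfl; simp at hfg; exact wpoly_monic.ne_zero hfg
    have hg0 : g ≠ 0 := by rintro rfl; simp at hfg; exact wpoly_monic.ne_zero hfg
    have hsum : f.natDegree + g.natDegree = 4 := by
      rw [← Polynomial.natDegree_mul hf0 hg0, ← hfg, wpoly_natDegree]
    have hf1 : f.natDegree ≠ 0 := fun h => hf (isUnit_of_natDeg_zero hf0 h)
    have hg1 : g.natDegree ≠ 0 := fun h => hg (isUnit_of_natDeg_zero hg0 h)
    have hnoroot : ∀ q : (ZMod 17)[X], q.natDegree = 1 → ¬ q ∣ wpoly := by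
      intro q hq hdvd
      obtain ⟨x, hx⟩ := root_of_natDeg_one hq
      obtain ⟨s, hs⟩ := hdvd
      apply wpoly_eval x
      rw [hs, Polynomial.eval_mul, hx, zero_mul]
    have hquad : ∀ q : (ZMod 17)[X], q ≠ 0 → q.natDegree = 2 → ¬ q ∣ wpoly := by
      intro q hq0 hq hdvd
      have hlc : q.leadingCoeff ≠ 0 := Polynomial.leadingCoeff_ne_zero.mpr hq0
      have hmon : (q * C q.leadingCoeff⁻¹).Monic := Polynomial.monic_mul_leadingCoeff_inv hq0
      have hdq : (q * C q.leadingCoeff⁻¹).degree = q.degree :=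
        Polynomial.degree_mul_leadingCoeff_inv q hq0
      have hnd : (q * C q.leadingCoeff⁻¹).natDegree = 2 := by
        rw [← hq]
        exact Polynomial.natDegree_eq_of_degree_eq hdq
      apply no_quad_factor hmon hnd
      exact dvd_trans ⟨C q.leadingCoeff, by
        rw [mul_assoc, ← Polynomial.C_mul, inv_mul_cancel₀ hlc, Polynomial.C_1, mul_one]⟩ hdvd
    have hcases : f.natDegree = 1 ∨ f.natDegree = 2 ∨ g.natDegree = 1 := by omega
    rcases hcases with h | h | h
    · exact hnoroot f h ⟨g, hfg⟩
    · exact hquad f hf0 h ⟨g, hfg⟩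
    · exact hnoroot g h ⟨f, by rw [hfg, mul_comm]⟩

noncomputable def fz : ℤ[X] :=
  X ^ 4 - C 768 * X ^ 3 - C 1312960 * X ^ 2 - C 383978496 * X - C 218071040

lemma fz_monic : fz.Monic := by unfold fz; monicity!

lemma fz_map17 : fz.map (Int.castRingHom (ZMod 17)) = wpoly := by
  unfold fz wpoly
  simp only [Polynomial.map_sub, Polynomial.map_pow, Polynomial.map_mul, Polynomial.map_X,
    Polynomial.map_C]
  have a3 : (14 : ZMod 17) = -(((768 : ℤ) : ZMod 17)) := by decide
  have a2 : (1 : ZMod 17) = -(((1312960 : ℤ) : ZMod 17)) := by decide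
  have a1 : (11 : ZMod 17) = -(((383978496 : ℤ) : ZMod 17)) := by decide
  have a0 : (13 : ZMod 17) = -(((218071040 : ℤ) : ZMod 17)) := by decide
  rw [a3, a2, a1, a0]
  simp only [Int.coe_castRingHom, eq_intCast]
  push_cast
  simp only [map_neg]
  ring

lemma fz_irred : Irreducible fz :=
  Polynomial.Monic.irreducible_of_irreducible_map (Int.castRingHom (ZMod 17)) fz fz_monic
    (by rw [fz_map17]; exact wpoly_irred)

noncomputable def fq : ℚ[X] :=
  X ^ 4 - C 768 * X ^ 3 - C 1312960 * X ^ 2 - C 383978496 * X - C 218071040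

lemma fq_irred : Irreducible fq := by
  have h := (fz_monic.irreducible_iff_irreducible_map_fraction_map (K := ℚ)).mp fz_irred
  have he : fz.map (algebraMap ℤ ℚ) = fq := by
    unfold fz fq
    simp only [Polynomial.map_sub, Polynomial.map_pow, Polynomial.map_mul, Polynomial.map_X,
      Polynomial.map_C]
    norm_num
  rwa [he] at h

noncomputable def lq : ℚ[X] := 8 * X ^ 3 + 12 * X ^ 2 + 8 * X + 4
noncomputable def b3 : ℚ[X] := -(4 * X ^ 5 + 6 * X ^ 4 - 12 * X ^ 3 - 32 * X ^ 2 - 22 * X - 12)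
noncomputable def b2 : ℚ[X] := -(12 * X ^ 5 + 17 * X ^ 4 - 4 * X ^ 3 - 40 * X ^ 2 - 27 * X - 14)
noncomputable def b1 : ℚ[X] := -(13 * X ^ 5 + 9 * X ^ 4 - 9 * X ^ 3 - 48 * X ^ 2 - 34 * X - 12)
noncomputable def b0 : ℚ[X] := -4 * X ^ 5 + 3 * X ^ 4 + 13 * X ^ 3 + 32 * X ^ 2 + 25 * X + 10
noncomputable def P : (ℚ[X])[X] :=
  X ^ 4 + C b3 * X ^ 3 + C (b2 * lq) * X ^ 2 + C (b1 * lq ^ 2) * X + C (b0 * lq ^ 3)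
noncomputable def Q : (ℚ[X])[X] :=
  C lq * X ^ 4 + C b3 * X ^ 3 + C b2 * X ^ 2 + C b1 * X + C b0

lemma idQ : C (lq ^ 3) * Q = P.comp (C lq * X) := by
  unfold P Q
  simp only [Polynomial.add_comp, Polynomial.mul_comp, Polynomial.pow_comp, Polynomial.C_comp,
    Polynomial.X_comp, map_mul, map_pow]
  ring

lemma m_lq : algebraMap ℚ[X] (RatFunc ℚ) lq
    = 8*RatFunc.X^3 + 12*RatFunc.X^2 + 8*RatFunc.X + 4 := by
  unfold lq
  simp only [map_add, map_mul, map_pow, map_ofNat, RatFunc.algebraMap_X]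

lemma m_b3 : algebraMap ℚ[X] (RatFunc ℚ) b3
    = -(4*RatFunc.X^5 + 6*RatFunc.X^4 - 12*RatFunc.X^3 - 32*RatFunc.X^2 - 22*RatFunc.X - 12) := by
  unfold b3
  simp only [map_neg, map_sub, map_add, map_mul, map_pow, map_ofNat, RatFunc.algebraMap_X]

lemma m_b2 : algebraMap ℚ[X] (RatFunc ℚ) b2
    = -(12*RatFunc.X^5 + 17*RatFunc.X^4 - 4*RatFunc.X^3 - 40*RatFunc.X^2 - 27*RatFunc.X - 14) := by
  unfold b2
  simp only [map_neg, map_sub, map_add, map_mul, map_pow, map_ofNat, RatFunc.algebraMap_X]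

lemma m_b1 : algebraMap ℚ[X] (RatFunc ℚ) b1
    = -(13*RatFunc.X^5 + 9*RatFunc.X^4 - 9*RatFunc.X^3 - 48*RatFunc.X^2 - 34*RatFunc.X - 12) := by
  unfold b1
  simp only [map_neg, map_sub, map_add, map_mul, map_pow, map_ofNat, RatFunc.algebraMap_X]

lemma m_b0 : algebraMap ℚ[X] (RatFunc ℚ) b0
    = -4*RatFunc.X^5 + 3*RatFunc.X^4 + 13*RatFunc.X^3 + 32*RatFunc.X^2 + 25*RatFunc.X + 10 := by
  unfold b0
  simp only [map_neg, map_sub, map_add, map_mul, map_pow, map_ofNat, RatFunc.algebraMap_X]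


lemma P_monic : P.Monic := by
  unfold P
  monicity!

lemma P_natDegree : P.natDegree = 4 := by
  unfold P
  compute_degree!

lemma P_map_eval : P.map (Polynomial.evalRingHom (3 : ℚ)) = fq := by
  unfold P fq
  simp only [Polynomial.map_add, Polynomial.map_pow, Polynomial.map_mul, Polynomial.map_X,
    Polynomial.map_C, Polynomial.coe_evalRingHom]
  unfold b3 b2 b1 b0 lq
  simp only [Polynomial.eval_mul, Polynomial.eval_add, Polynomial.eval_sub, Polynomial.eval_neg,
    Polynomial.eval_pow, Polynomial.eval_X, Polynomial.eval_ofNat]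
  norm_num
  ring

lemma P_irred : Irreducible P :=
  Polynomial.Monic.irreducible_of_irreducible_map (Polynomial.evalRingHom (3 : ℚ)) P P_monic
    (by rw [P_map_eval]; exact fq_irred)

lemma Pmap_irred : Irreducible (P.map (algebraMap ℚ[X] (RatFunc ℚ))) :=
  (P_monic.irreducible_iff_irreducible_map_fraction_map (K := RatFunc ℚ)).mp P_irred

lemma isUnit_comp {F : Type*} [Field F] {f : F[X]} {b : F} (hb : b ≠ 0)
    (h : IsUnit (f.comp (C b * X))) : IsUnit f := by
  have hf0 : f ≠ 0 := by
    rintro rfl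
    simp only [Polynomial.zero_comp] at h
    exact not_isUnit_zero h
  apply isUnit_of_natDeg_zero hf0
  have hd := Polynomial.natDegree_eq_zero_of_isUnit h
  rw [Polynomial.natDegree_comp, Polynomial.natDegree_C_mul_X _ hb] at hd
  omega

lemma irr_comp_CmulX {F : Type*} [Field F] {q : F[X]} (hq : Irreducible q)
    (hd : 0 < q.natDegree) {a : F} (ha : a ≠ 0) : Irreducible (q.comp (C a * X)) := by
  constructor
  · intro hunit
    have hdd := Polynomial.natDegree_eq_zero_of_isUnit hunit
    rw [Polynomial.natDegree_comp, Polynomial.natDegree_C_mul_X _ ha] at hdd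
    omega
  · intro f g hfg
    have h1 : (C a * X).comp (C a⁻¹ * X) = X := by
      rw [Polynomial.mul_comp, Polynomial.C_comp, Polynomial.X_comp, ← mul_assoc,
        ← Polynomial.C_mul, mul_inv_cancel₀ ha, Polynomial.C_1, one_mul]
    have hqeq : q = f.comp (C a⁻¹ * X) * g.comp (C a⁻¹ * X) := by
      calc q = (q.comp (C a * X)).comp (C a⁻¹ * X) := by
              rw [Polynomial.comp_assoc, h1, Polynomial.comp_X]
        _ = _ := by rw [hfg, Polynomial.mul_comp]
    rcases hq.isUnit_or_isUnit hqeq with h | h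
    · exact Or.inl (isUnit_comp (inv_ne_zero ha) h)
    · exact Or.inr (isUnit_comp (inv_ne_zero ha) h)

end Stmt9Aux

set_option maxHeartbeats 800000 in
/-- Over `ℚ(t)`, the quartic
`(8t³+12t²+8t+4)X⁴ - (4t⁵+6t⁴-12t³-32t²-22t-12)X³ - (12t⁵+17t⁴-4t³-40t²-27t-14)X²
 - (13t⁵+9t⁴-9t³-48t²-34t-12)X - 4t⁵+3t⁴+13t³+32t²+25t+10`
is irreducible of degree 4. -/
theorem stmt9 :
    let t : RatFunc ℚ := RatFunc.X
    let p : Polynomial (RatFunc ℚ) :=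
      C (8*t^3 + 12*t^2 + 8*t + 4) * X^4
        - C (4*t^5 + 6*t^4 - 12*t^3 - 32*t^2 - 22*t - 12) * X^3
        - C (12*t^5 + 17*t^4 - 4*t^3 - 40*t^2 - 27*t - 14) * X^2
        - C (13*t^5 + 9*t^4 - 9*t^3 - 48*t^2 - 34*t - 12) * X
        + C (-4*t^5 + 3*t^4 + 13*t^3 + 32*t^2 + 25*t + 10)
    Irreducible p ∧ p.natDegree = 4 := by
  intro t p
  have ht : t = RatFunc.X := rfl
  have hp : p = C (8*t^3 + 12*t^2 + 8*t + 4) * X^4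
        - C (4*t^5 + 6*t^4 - 12*t^3 - 32*t^2 - 22*t - 12) * X^3
        - C (12*t^5 + 17*t^4 - 4*t^3 - 40*t^2 - 27*t - 14) * X^2
        - C (13*t^5 + 9*t^4 - 9*t^3 - 48*t^2 - 34*t - 12) * X
        + C (-4*t^5 + 3*t^4 + 13*t^3 + 32*t^2 + 25*t + 10) := rfl
  have hl0 : (8*t^3 + 12*t^2 + 8*t + 4 : RatFunc ℚ) ≠ 0 := by
    rw [ht, ← Stmt9Aux.m_lq]
    apply RatFunc.algebraMap_ne_zero
    have h3 : Stmt9Aux.lq.natDegree = 3 := by unfold Stmt9Aux.lq; compute_degree!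
    exact fun h => by simp [h] at h3
  have hQmap : Stmt9Aux.Q.map (algebraMap ℚ[X] (RatFunc ℚ)) = p := by
    rw [hp, ht]
    unfold Stmt9Aux.Q
    simp only [Polynomial.map_add, Polynomial.map_mul, Polynomial.map_pow, Polynomial.map_C,
      Polynomial.map_X, Stmt9Aux.m_lq, Stmt9Aux.m_b3, Stmt9Aux.m_b2, Stmt9Aux.m_b1,
      Stmt9Aux.m_b0, map_neg]
    ring
  set Pm : Polynomial (RatFunc ℚ) := Stmt9Aux.P.map (algebraMap ℚ[X] (RatFunc ℚ)) with hPmdef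
  have key : C ((8*t^3 + 12*t^2 + 8*t + 4)^3) * p
      = Pm.comp (C (8*t^3 + 12*t^2 + 8*t + 4) * X) := by
    have h := congrArg (Polynomial.map (algebraMap ℚ[X] (RatFunc ℚ))) Stmt9Aux.idQ
    rw [Polynomial.map_mul, Polynomial.map_comp, Polynomial.map_mul, Polynomial.map_C,
      Polynomial.map_C, Polynomial.map_X, hQmap, map_pow, Stmt9Aux.m_lq] at h
    rw [ht]
    exact h
  have hPmdeg : Pm.natDegree = 4 := by
    rw [hPmdef, Stmt9Aux.P_monic.natDegree_map, Stmt9Aux.P_natDegree]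
  have hRHSdeg : (Pm.comp (C (8*t^3 + 12*t^2 + 8*t + 4) * X)).natDegree = 4 := by
    rw [Polynomial.natDegree_comp, hPmdeg, Polynomial.natDegree_C_mul_X _ hl0]
  have hRHSne : Pm.comp (C (8*t^3 + 12*t^2 + 8*t + 4) * X) ≠ 0 := by
    intro h
    rw [h] at hRHSdeg
    simp at hRHSdeg
  have hp0 : p ≠ 0 := by
    rintro h
    rw [h, mul_zero] at key
    exact hRHSne key.symm
  have hC0 : (C ((8*t^3 + 12*t^2 + 8*t + 4)^3) : Polynomial (RatFunc ℚ)) ≠ 0 :=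
    Polynomial.C_ne_zero.mpr (pow_ne_zero 3 hl0)
  have hdeg : p.natDegree = 4 := by
    have h4 : (C ((8*t^3 + 12*t^2 + 8*t + 4)^3) * p).natDegree = 4 := by
      rw [key]; exact hRHSdeg
    rwa [Polynomial.natDegree_mul hC0 hp0, Polynomial.natDegree_C, zero_add] at h4
  refine ⟨?_, hdeg⟩
  have hcomp : Irreducible (Pm.comp (C (8*t^3 + 12*t^2 + 8*t + 4) * X)) :=
    Stmt9Aux.irr_comp_CmulX Stmt9Aux.Pmap_irred (by rw [hPmdeg]; norm_num) hl0
  have hirr : Irreducible (C ((8*t^3 + 12*t^2 + 8*t + 4)^3) * p) := key ▸ hcomp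
  have hu : IsUnit (C ((8*t^3 + 12*t^2 + 8*t + 4)^3) : Polynomial (RatFunc ℚ)) :=
    Polynomial.isUnit_C.mpr (isUnit_iff_ne_zero.mpr (pow_ne_zero 3 hl0))
  have hassoc : Associated (C ((8*t^3 + 12*t^2 + 8*t + 4)^3) * p) p := by
    rcases hu with ⟨u, hu2⟩
    exact ⟨u⁻¹, by rw [← hu2, mul_comm (↑u : Polynomial (RatFunc ℚ)) p, mul_assoc,
      Units.mul_inv, mul_one]⟩
  exact hassoc.irreducible hirr
end

section
/- Let F(X,Y) = Y⁵ - Y⁴X² - 2Y⁴X - 10Y⁴ + Y³X³ + 11Y³X² + 9Y³X + 33Y³ - Y²X⁴ - 2Y²X³ - 36Y²X² - 10Y²X - 37Y² + 3YX⁵ + 22YX⁴ + 12YX³ + 36YX² + 6YX + 17Y - 2X⁶ + 2X⁵ - 3X⁴ + 4X³ - 3X² + 2X - 2. Then F is irreducible as a polynomial in ℚ[X,Y]. -/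
open MvPolynomial

namespace Stmt10Aux
open Polynomial

noncomputable def q3 : Polynomial (ZMod 3) :=
  Polynomial.X^5 - 10*Polynomial.X^4 + 33*Polynomial.X^3 - 37*Polynomial.X^2 + 17*Polynomial.X - 2

lemma zmod3_cases : ∀ a : ZMod 3, a = 0 ∨ a = 1 ∨ a = 2 := by decide

lemma q3_natDegree : q3.natDegree = 5 := by unfold q3; compute_degree!

lemma q3_ne : q3 ≠ 0 := fun h => by
  have := q3_natDegree
  rw [h] at this
  simp at this

lemma q3_no_root : ∀ r : ZMod 3, ¬ q3.IsRoot r := by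
  have h := zmod3_cases
  intro r hr
  rcases h r with rfl | rfl | rfl <;>
    · simp only [q3, Polynomial.IsRoot.def, Polynomial.eval_sub, Polynomial.eval_add, Polynomial.eval_mul, Polynomial.eval_pow, Polynomial.eval_X, Polynomial.eval_ofNat] at hr
      revert hr
      decide

lemma not_dvd_of_rem {K : Type*} [Field K] {d q Q R : Polynomial K}
    (hdeg : d.degree = 2) (h : q = d * Q + R) (hR : R.degree < 2) (hR0 : R ≠ 0) :
    ¬ d ∣ q := by
  intro hdvd
  have hdR : d ∣ R := by
    have hE : R = q - d * Q := by rw [h]; ring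
    rw [hE]
    exact dvd_sub hdvd (dvd_mul_right _ _)
  exact hR0 (Polynomial.eq_zero_of_dvd_of_degree_lt hdR (by rw [hdeg]; exact hR))

lemma quad_deg (b1 b0 : ZMod 3) :
    (Polynomial.X^2 + Polynomial.C b1 * Polynomial.X + Polynomial.C b0).degree = 2 := by
  have h : (Polynomial.X^2 + Polynomial.C b1 * Polynomial.X + Polynomial.C b0 : Polynomial (ZMod 3))
      = Polynomial.C 1 * Polynomial.X^2 + Polynomial.C b1 * Polynomial.X + Polynomial.C b0 := by
    rw [Polynomial.C_1, one_mul]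
  rw [h]
  exact degree_quadratic one_ne_zero

lemma eq_quadratic {K : Type*} [CommRing K] {p : Polynomial K} (hm : p.Monic)
    (h2 : p.natDegree = 2) :
    p = Polynomial.X ^ 2 + Polynomial.C (p.coeff 1) * Polynomial.X + Polynomial.C (p.coeff 0) := by
  ext n
  rcases n with _ | _ | _ | n
  · simp
  · simp [Polynomial.coeff_X_pow]
  · have : p.coeff 2 = 1 := by
      have := hm.coeff_natDegree
      rwa [h2] at this
    simp [Polynomial.coeff_X_pow, this]
  · have hlt : p.natDegree < n + 3 := by omega
    simp [Polynomial.coeff_eq_zero_of_natDegree_lt hlt, Polynomial.coeff_X_pow, Nat.succ_ne_zero]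

lemma no_small_divisor (g : Polynomial (ZMod 3)) (hdvd : g ∣ q3) (hg0 : g ≠ 0)
    (h12 : g.natDegree = 1 ∨ g.natDegree = 2) : False := by
  have hlc : g.leadingCoeff ≠ 0 := Polynomial.leadingCoeff_ne_zero.mpr hg0
  have hum : (g * Polynomial.C g.leadingCoeff⁻¹).Monic :=
    Polynomial.monic_mul_leadingCoeff_inv hg0
  have hund : (g * Polynomial.C g.leadingCoeff⁻¹).natDegree = g.natDegree :=
    Polynomial.natDegree_mul_leadingCoeff_inv g hg0
  have hudvd : g * Polynomial.C g.leadingCoeff⁻¹ ∣ q3 :=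
    (IsUnit.mul_right_dvd (Polynomial.isUnit_C.mpr
      (isUnit_iff_ne_zero.mpr (inv_ne_zero hlc)))).mpr hdvd
  set d := g * Polynomial.C g.leadingCoeff⁻¹ with hdset
  rcases h12 with h1 | h2
  · -- linear
    have hd : d = Polynomial.X + Polynomial.C (d.coeff 0) :=
      hum.eq_X_add_C (hund.trans h1)
    rw [hd] at hudvd
    have hsub : Polynomial.X - Polynomial.C (-(d.coeff 0)) ∣ q3 := by
      rwa [map_neg, sub_neg_eq_add]
    exact q3_no_root _ ((Polynomial.dvd_iff_isRoot).mp hsub)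
  · have hd : d = Polynomial.X ^ 2 + Polynomial.C (d.coeff 1) * Polynomial.X
        + Polynomial.C (d.coeff 0) := eq_quadratic hum (hund.trans h2)
    rw [hd] at hudvd
    rcases zmod3_cases (d.coeff 1) with e1 | e1 | e1 <;> rw [e1] at hudvd <;>
      [rcases zmod3_cases (d.coeff 0) with e0 | e0 | e0;
       rcases zmod3_cases (d.coeff 0) with e0 | e0 | e0;
       rcases zmod3_cases (d.coeff 0) with e0 | e0 | e0] <;> rw [e0] at hudvd
    · exact not_dvd_of_rem (quad_deg 0 0)
        (show q3 = (Polynomial.X^2 + Polynomial.C 0 * Polynomial.X + Polynomial.C 0) * ((-37 : Polynomial (ZMod 3)) + 33*Polynomial.X - 10*Polynomial.X^2 + Polynomial.X^3) + ((-2 : Polynomial (ZMod 3)) + 17*Polynomial.X) by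
          unfold q3
          simp only [Polynomial.C_0, Polynomial.C_1, map_ofNat]
          ring)
        (lt_of_le_of_lt (show (((-2 : Polynomial (ZMod 3)) + 17*Polynomial.X) : Polynomial (ZMod 3)).degree ≤ 1 by compute_degree) (by decide))
        (show (((-2 : Polynomial (ZMod 3)) + 17*Polynomial.X) : Polynomial (ZMod 3)) ≠ 0 by
          intro h0
          have he := congrArg (Polynomial.eval (0 : ZMod 3)) h0
          simp only [Polynomial.eval_add, Polynomial.eval_sub, Polynomial.eval_mul, Polynomial.eval_neg, Polynomial.eval_ofNat, Polynomial.eval_X, Polynomial.eval_pow, Polynomial.eval_zero] at he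
          revert he
          decide)
        hudvd
    · exact not_dvd_of_rem (quad_deg 0 1)
        (show q3 = (Polynomial.X^2 + Polynomial.C 0 * Polynomial.X + Polynomial.C 1) * ((-27 : Polynomial (ZMod 3)) + 32*Polynomial.X - 10*Polynomial.X^2 + Polynomial.X^3) + ((25 : Polynomial (ZMod 3)) - 15*Polynomial.X) by
          unfold q3
          simp only [Polynomial.C_0, Polynomial.C_1, map_ofNat]
          ring)
        (lt_of_le_of_lt (show (((25 : Polynomial (ZMod 3)) - 15*Polynomial.X) : Polynomial (ZMod 3)).degree ≤ 1 by compute_degree) (by decide))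
        (show (((25 : Polynomial (ZMod 3)) - 15*Polynomial.X) : Polynomial (ZMod 3)) ≠ 0 by
          intro h0
          have he := congrArg (Polynomial.eval (0 : ZMod 3)) h0
          simp only [Polynomial.eval_add, Polynomial.eval_sub, Polynomial.eval_mul, Polynomial.eval_neg, Polynomial.eval_ofNat, Polynomial.eval_X, Polynomial.eval_pow, Polynomial.eval_zero] at he
          revert he
          decide)
        hudvd
    · exact not_dvd_of_rem (quad_deg 0 2)
        (show q3 = (Polynomial.X^2 + Polynomial.C 0 * Polynomial.X + Polynomial.C 2) * ((-17 : Polynomial (ZMod 3)) + 31*Polynomial.X - 10*Polynomial.X^2 + Polynomial.X^3) + ((32 : Polynomial (ZMod 3)) - 45*Polynomial.X) by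
          unfold q3
          simp only [Polynomial.C_0, Polynomial.C_1, map_ofNat]
          ring)
        (lt_of_le_of_lt (show (((32 : Polynomial (ZMod 3)) - 45*Polynomial.X) : Polynomial (ZMod 3)).degree ≤ 1 by compute_degree) (by decide))
        (show (((32 : Polynomial (ZMod 3)) - 45*Polynomial.X) : Polynomial (ZMod 3)) ≠ 0 by
          intro h0
          have he := congrArg (Polynomial.eval (0 : ZMod 3)) h0
          simp only [Polynomial.eval_add, Polynomial.eval_sub, Polynomial.eval_mul, Polynomial.eval_neg, Polynomial.eval_ofNat, Polynomial.eval_X, Polynomial.eval_pow, Polynomial.eval_zero] at he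
          revert he
          decide)
        hudvd
    · exact not_dvd_of_rem (quad_deg 1 0)
        (show q3 = (Polynomial.X^2 + Polynomial.C 1 * Polynomial.X + Polynomial.C 0) * ((-81 : Polynomial (ZMod 3)) + 44*Polynomial.X - 11*Polynomial.X^2 + Polynomial.X^3) + ((-2 : Polynomial (ZMod 3)) + 98*Polynomial.X) by
          unfold q3
          simp only [Polynomial.C_0, Polynomial.C_1, map_ofNat]
          ring)
        (lt_of_le_of_lt (show (((-2 : Polynomial (ZMod 3)) + 98*Polynomial.X) : Polynomial (ZMod 3)).degree ≤ 1 by compute_degree) (by decide))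
        (show (((-2 : Polynomial (ZMod 3)) + 98*Polynomial.X) : Polynomial (ZMod 3)) ≠ 0 by
          intro h0
          have he := congrArg (Polynomial.eval (0 : ZMod 3)) h0
          simp only [Polynomial.eval_add, Polynomial.eval_sub, Polynomial.eval_mul, Polynomial.eval_neg, Polynomial.eval_ofNat, Polynomial.eval_X, Polynomial.eval_pow, Polynomial.eval_zero] at he
          revert he
          decide)
        hudvd
    · exact not_dvd_of_rem (quad_deg 1 1)
        (show q3 = (Polynomial.X^2 + Polynomial.C 1 * Polynomial.X + Polynomial.C 1) * ((-69 : Polynomial (ZMod 3)) + 43*Polynomial.X - 11*Polynomial.X^2 + Polynomial.X^3) + ((67 : Polynomial (ZMod 3)) + 43*Polynomial.X) by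
          unfold q3
          simp only [Polynomial.C_0, Polynomial.C_1, map_ofNat]
          ring)
        (lt_of_le_of_lt (show (((67 : Polynomial (ZMod 3)) + 43*Polynomial.X) : Polynomial (ZMod 3)).degree ≤ 1 by compute_degree) (by decide))
        (show (((67 : Polynomial (ZMod 3)) + 43*Polynomial.X) : Polynomial (ZMod 3)) ≠ 0 by
          intro h0
          have he := congrArg (Polynomial.eval (0 : ZMod 3)) h0
          simp only [Polynomial.eval_add, Polynomial.eval_sub, Polynomial.eval_mul, Polynomial.eval_neg, Polynomial.eval_ofNat, Polynomial.eval_X, Polynomial.eval_pow, Polynomial.eval_zero] at he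
          revert he
          decide)
        hudvd
    · exact not_dvd_of_rem (quad_deg 1 2)
        (show q3 = (Polynomial.X^2 + Polynomial.C 1 * Polynomial.X + Polynomial.C 2) * ((-57 : Polynomial (ZMod 3)) + 42*Polynomial.X - 11*Polynomial.X^2 + Polynomial.X^3) + ((112 : Polynomial (ZMod 3)) - 10*Polynomial.X) by
          unfold q3
          simp only [Polynomial.C_0, Polynomial.C_1, map_ofNat]
          ring)
        (lt_of_le_of_lt (show (((112 : Polynomial (ZMod 3)) - 10*Polynomial.X) : Polynomial (ZMod 3)).degree ≤ 1 by compute_degree) (by decide))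
        (show (((112 : Polynomial (ZMod 3)) - 10*Polynomial.X) : Polynomial (ZMod 3)) ≠ 0 by
          intro h0
          have he := congrArg (Polynomial.eval (0 : ZMod 3)) h0
          simp only [Polynomial.eval_add, Polynomial.eval_sub, Polynomial.eval_mul, Polynomial.eval_neg, Polynomial.eval_ofNat, Polynomial.eval_X, Polynomial.eval_pow, Polynomial.eval_zero] at he
          revert he
          decide)
        hudvd
    · exact not_dvd_of_rem (quad_deg 2 0)
        (show q3 = (Polynomial.X^2 + Polynomial.C 2 * Polynomial.X + Polynomial.C 0) * ((-151 : Polynomial (ZMod 3)) + 57*Polynomial.X - 12*Polynomial.X^2 + Polynomial.X^3) + ((-2 : Polynomial (ZMod 3)) + 319*Polynomial.X) by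
          unfold q3
          simp only [Polynomial.C_0, Polynomial.C_1, map_ofNat]
          ring)
        (lt_of_le_of_lt (show (((-2 : Polynomial (ZMod 3)) + 319*Polynomial.X) : Polynomial (ZMod 3)).degree ≤ 1 by compute_degree) (by decide))
        (show (((-2 : Polynomial (ZMod 3)) + 319*Polynomial.X) : Polynomial (ZMod 3)) ≠ 0 by
          intro h0
          have he := congrArg (Polynomial.eval (0 : ZMod 3)) h0
          simp only [Polynomial.eval_add, Polynomial.eval_sub, Polynomial.eval_mul, Polynomial.eval_neg, Polynomial.eval_ofNat, Polynomial.eval_X, Polynomial.eval_pow, Polynomial.eval_zero] at he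
          revert he
          decide)
        hudvd
    · exact not_dvd_of_rem (quad_deg 2 1)
        (show q3 = (Polynomial.X^2 + Polynomial.C 2 * Polynomial.X + Polynomial.C 1) * ((-137 : Polynomial (ZMod 3)) + 56*Polynomial.X - 12*Polynomial.X^2 + Polynomial.X^3) + ((135 : Polynomial (ZMod 3)) + 235*Polynomial.X) by
          unfold q3
          simp only [Polynomial.C_0, Polynomial.C_1, map_ofNat]
          ring)
        (lt_of_le_of_lt (show (((135 : Polynomial (ZMod 3)) + 235*Polynomial.X) : Polynomial (ZMod 3)).degree ≤ 1 by compute_degree) (by decide))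
        (show (((135 : Polynomial (ZMod 3)) + 235*Polynomial.X) : Polynomial (ZMod 3)) ≠ 0 by
          intro h0
          have he := congrArg (Polynomial.eval (1 : ZMod 3)) h0
          simp only [Polynomial.eval_add, Polynomial.eval_sub, Polynomial.eval_mul, Polynomial.eval_neg, Polynomial.eval_ofNat, Polynomial.eval_X, Polynomial.eval_pow, Polynomial.eval_zero] at he
          revert he
          decide)
        hudvd
    · exact not_dvd_of_rem (quad_deg 2 2)
        (show q3 = (Polynomial.X^2 + Polynomial.C 2 * Polynomial.X + Polynomial.C 2) * ((-123 : Polynomial (ZMod 3)) + 55*Polynomial.X - 12*Polynomial.X^2 + Polynomial.X^3) + ((244 : Polynomial (ZMod 3)) + 153*Polynomial.X) by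
          unfold q3
          simp only [Polynomial.C_0, Polynomial.C_1, map_ofNat]
          ring)
        (lt_of_le_of_lt (show (((244 : Polynomial (ZMod 3)) + 153*Polynomial.X) : Polynomial (ZMod 3)).degree ≤ 1 by compute_degree) (by decide))
        (show (((244 : Polynomial (ZMod 3)) + 153*Polynomial.X) : Polynomial (ZMod 3)) ≠ 0 by
          intro h0
          have he := congrArg (Polynomial.eval (0 : ZMod 3)) h0
          simp only [Polynomial.eval_add, Polynomial.eval_sub, Polynomial.eval_mul, Polynomial.eval_neg, Polynomial.eval_ofNat, Polynomial.eval_X, Polynomial.eval_pow, Polynomial.eval_zero] at he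
          revert he
          decide)
        hudvd

lemma q3_irreducible : Irreducible q3 := by
  constructor
  · intro hu
    have h0 := Polynomial.natDegree_eq_zero_of_isUnit hu
    rw [q3_natDegree] at h0
    exact absurd h0 (by norm_num)
  · intro a b hab
    by_contra hc
    push_neg at hc
    obtain ⟨ha, hb⟩ := hc
    have ha0 : a ≠ 0 := by rintro rfl; rw [zero_mul] at hab; exact q3_ne hab
    have hb0 : b ≠ 0 := by rintro rfl; rw [mul_zero] at hab; exact q3_ne hab
    have hna : a.natDegree ≠ 0 := by
      intro h
      rw [Polynomial.eq_C_of_natDegree_eq_zero h] at ha ha0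
      exact ha (Polynomial.isUnit_C.mpr (isUnit_iff_ne_zero.mpr
        (fun hc0 => ha0 (by rw [hc0, map_zero]))))
    have hnb : b.natDegree ≠ 0 := by
      intro h
      rw [Polynomial.eq_C_of_natDegree_eq_zero h] at hb hb0
      exact hb (Polynomial.isUnit_C.mpr (isUnit_iff_ne_zero.mpr
        (fun hc0 => hb0 (by rw [hc0, map_zero]))))
    have hsum : a.natDegree + b.natDegree = 5 := by
      rw [← Polynomial.natDegree_mul ha0 hb0, ← hab, q3_natDegree]
    have hadvd : a ∣ q3 := ⟨b, hab⟩
    have hbdvd : b ∣ q3 := ⟨a, by rw [hab, mul_comm]⟩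
    rcases (show a.natDegree = 1 ∨ a.natDegree = 2 ∨ b.natDegree = 1 ∨ b.natDegree = 2 by
      omega) with h | h | h | h
    · exact no_small_divisor a hadvd ha0 (Or.inl h)
    · exact no_small_divisor a hadvd ha0 (Or.inr h)
    · exact no_small_divisor b hbdvd hb0 (Or.inl h)
    · exact no_small_divisor b hbdvd hb0 (Or.inr h)

noncomputable def qZ : Polynomial ℤ :=
  Polynomial.X^5 - 10*Polynomial.X^4 + 33*Polynomial.X^3 - 37*Polynomial.X^2 + 17*Polynomial.X - 2

lemma qZ_monic : qZ.Monic := by unfold qZ; monicity!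

lemma map_qZ : qZ.map (Int.castRingHom (ZMod 3)) = q3 := by
  unfold qZ q3
  simp only [Polynomial.map_sub, Polynomial.map_add, Polynomial.map_mul, Polynomial.map_pow,
    Polynomial.map_ofNat, Polynomial.map_X]

lemma qZ_irred : Irreducible qZ := by
  haveI : Fact (Nat.Prime 3) := ⟨by norm_num⟩
  exact Polynomial.Monic.irreducible_of_irreducible_map (Int.castRingHom (ZMod 3)) qZ qZ_monic
    (map_qZ ▸ q3_irreducible)

noncomputable def qQ : Polynomial ℚ :=
  Polynomial.X^5 - 10*Polynomial.X^4 + 33*Polynomial.X^3 - 37*Polynomial.X^2 + 17*Polynomial.X - 2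

lemma map_qZQ : qZ.map (Int.castRingHom ℚ) = qQ := by
  unfold qZ qQ
  simp only [Polynomial.map_sub, Polynomial.map_add, Polynomial.map_mul, Polynomial.map_pow,
    Polynomial.map_ofNat, Polynomial.map_X]

lemma qQ_irred : Irreducible qQ :=
  map_qZQ ▸
    (Polynomial.IsPrimitive.Int.irreducible_iff_irreducible_map_cast qZ_monic.isPrimitive).mp
      qZ_irred

end Stmt10Aux

open MvPolynomial

set_option maxHeartbeats 2000000 in
/-- The degree 6 plane model of the genus 6 modular curve
`X₀(58)` has irreducible defining polynomial `F(X,Y) ∈ ℚ[X,Y]`. -/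
theorem stmt10 :
    let x : MvPolynomial (Fin 2) ℚ := X 0
    let y : MvPolynomial (Fin 2) ℚ := X 1
    let F : MvPolynomial (Fin 2) ℚ :=
      y^5 - y^4*x^2 - 2*y^4*x - 10*y^4 + y^3*x^3 + 11*y^3*x^2 + 9*y^3*x
        + 33*y^3 - y^2*x^4 - 2*y^2*x^3 - 36*y^2*x^2 - 10*y^2*x - 37*y^2
        + 3*y*x^5 + 22*y*x^4 + 12*y*x^3 + 36*y*x^2 + 6*y*x + 17*y
        - 2*x^6 + 2*x^5 - 3*x^4 + 4*x^3 - 3*x^2 + 2*x - 2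
    Irreducible F := by
  intro x y F
  set R := MvPolynomial (Fin 1) ℚ with hR
  let E : MvPolynomial (Fin 2) ℚ ≃ₐ[ℚ] Polynomial R :=
    (MvPolynomial.renameEquiv ℚ (Equiv.swap 0 1)).trans (MvPolynomial.finSuccEquiv ℚ 1)
  have hEx : E x = Polynomial.C (MvPolynomial.X 0) := by
    show (MvPolynomial.finSuccEquiv ℚ 1)
      (MvPolynomial.rename (Equiv.swap (0 : Fin 2) 1) (MvPolynomial.X 0)) = _
    rw [MvPolynomial.rename_X, Equiv.swap_apply_left,
      show (1 : Fin 2) = (0 : Fin 1).succ from rfl, MvPolynomial.finSuccEquiv_X_succ]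
  have hEy : E y = Polynomial.X := by
    show (MvPolynomial.finSuccEquiv ℚ 1)
      (MvPolynomial.rename (Equiv.swap (0 : Fin 2) 1) (MvPolynomial.X 1)) = _
    rw [MvPolynomial.rename_X, Equiv.swap_apply_right, MvPolynomial.finSuccEquiv_X_zero]
  set c : Polynomial R := Polynomial.C (MvPolynomial.X 0) with hc
  set Y : Polynomial R := Polynomial.X with hY
  have hEF : E F =
      Y^5 - Y^4*c^2 - 2*Y^4*c - 10*Y^4 + Y^3*c^3 + 11*Y^3*c^2 + 9*Y^3*c
        + 33*Y^3 - Y^2*c^4 - 2*Y^2*c^3 - 36*Y^2*c^2 - 10*Y^2*c - 37*Y^2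
        + 3*Y*c^5 + 22*Y*c^4 + 12*Y*c^3 + 36*Y*c^2 + 6*Y*c + 17*Y
        - 2*c^6 + 2*c^5 - 3*c^4 + 4*c^3 - 3*c^2 + 2*c - 2 := by
    simp only [F, map_sub, map_add, map_mul, map_pow, map_ofNat, hEx, hEy]
  have hmonic : (E F).Monic := by
    rw [hEF, hY, hc]
    monicity!
  have hmap : (E F).map (MvPolynomial.eval (fun _ => (0 : ℚ))) = Stmt10Aux.qQ := by
    rw [hEF, hY, hc]
    unfold Stmt10Aux.qQ
    simp only [Polynomial.map_sub, Polynomial.map_add, Polynomial.map_mul, Polynomial.map_pow,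
      Polynomial.map_ofNat, Polynomial.map_X, Polynomial.map_C, MvPolynomial.eval_X,
      Polynomial.C_0]
    ring
  have hirr : Irreducible (E F) :=
    Polynomial.Monic.irreducible_of_irreducible_map (MvPolynomial.eval (fun _ => (0 : ℚ)))
      (E F) hmonic (hmap ▸ Stmt10Aux.qQ_irred)
  exact (MulEquiv.irreducible_iff (E : MvPolynomial (Fin 2) ℚ ≃ₐ[ℚ] Polynomial R)).mp hirr
end

section
/- Let k be an algebraically closed field and M a 2×3 matrix of linear forms in k[x_1,...,x_6] whose three maximal 2×2 minors Q_1, Q_2, Q_3 are linearly independent and such that every nonzero element of the k-span of Q_1, Q_2, Q_3 is an irreducible quadratic form. Then M is 1-generic: for all invertible matrices U ∈ GL_2(k), V ∈ GL_3(k), every entry of UMV is a nonzero linear form. -/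
open MvPolynomial

/-- The 2×2 minor of a 2×3 matrix obtained by deleting column `i`
(columns kept in their natural order). -/
def minorDel {R : Type} [CommRing R] (M : Matrix (Fin 2) (Fin 3) R) : Fin 3 → R
  | 0 => M 0 1 * M 1 2 - M 0 2 * M 1 1
  | 1 => M 0 0 * M 1 2 - M 0 2 * M 1 0
  | 2 => M 0 0 * M 1 1 - M 0 1 * M 1 0

/-- Unsigned `(s,t)` minor of a 3×3 matrix (delete row `s`, column `t`). -/
def minor3 {R : Type} [CommRing R] (V : Matrix (Fin 3) (Fin 3) R) : Fin 3 → Fin 3 → R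
  | 0, 0 => V 1 1 * V 2 2 - V 1 2 * V 2 1
  | 0, 1 => V 1 0 * V 2 2 - V 1 2 * V 2 0
  | 0, 2 => V 1 0 * V 2 1 - V 1 1 * V 2 0
  | 1, 0 => V 0 1 * V 2 2 - V 0 2 * V 2 1
  | 1, 1 => V 0 0 * V 2 2 - V 0 2 * V 2 0
  | 1, 2 => V 0 0 * V 2 1 - V 0 1 * V 2 0
  | 2, 0 => V 0 1 * V 1 2 - V 0 2 * V 1 1
  | 2, 1 => V 0 0 * V 1 2 - V 0 2 * V 1 0
  | 2, 2 => V 0 0 * V 1 1 - V 0 1 * V 1 0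

lemma key_minor {R : Type} [CommRing R] (u : Matrix (Fin 2) (Fin 2) R)
    (M : Matrix (Fin 2) (Fin 3) R) (v : Matrix (Fin 3) (Fin 3) R) (t : Fin 3) :
    minorDel (u * M * v) t = u.det * ∑ s, minor3 v s t * minorDel M s := by
  fin_cases t <;>
    simp [minorDel, minor3, Matrix.mul_apply, Matrix.det_fin_two, Fin.sum_univ_succ] <;>
    ring

lemma det_minor3 {R : Type} [CommRing R] (v : Matrix (Fin 3) (Fin 3) R) :
    (Matrix.of fun s t => minor3 v s t).det = v.det ^ 2 := by
  simp [Matrix.det_fin_three, minor3]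
  ring

/-- A 2×3 matrix of linear forms whose maximal minors are
linearly independent and span a space all of whose nonzero elements are
irreducible quadrics is 1-generic: for all invertible constant matrices
`U ∈ GL₂(k)`, `V ∈ GL₃(k)`, every entry of `U M V` is nonzero. -/
theorem stmt19 {k : Type} [Field k] [IsAlgClosed k]
    (M : Matrix (Fin 2) (Fin 3) (MvPolynomial (Fin 6) k))
    (hM : ∀ i j, (M i j).IsHomogeneous 1)
    (hli : LinearIndependent k (minorDel M))
    (hirr : ∀ q ∈ Submodule.span k (Set.range (minorDel M)),
      q ≠ 0 → Irreducible q) :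
    ∀ (U : Matrix (Fin 2) (Fin 2) k) (V : Matrix (Fin 3) (Fin 3) k),
      IsUnit U.det → IsUnit V.det →
      ∀ (i : Fin 2) (j : Fin 3),
        ((U.map (C : k → MvPolynomial (Fin 6) k)) * M *
          (V.map (C : k → MvPolynomial (Fin 6) k))) i j ≠ 0 := by
  intro U V hU hV
  set N : Matrix (Fin 2) (Fin 3) (MvPolynomial (Fin 6) k) :=
    (U.map (C : k → MvPolynomial (Fin 6) k)) * M * (V.map (C : k → MvPolynomial (Fin 6) k)) with hNdef
  -- determinant of the mapped matrix
  have hdet : (U.map (C : k → MvPolynomial (Fin 6) k)).det = C U.det :=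
    ((C : k →+* MvPolynomial (Fin 6) k).map_det U).symm
  have hm3 : ∀ s t, minor3 (V.map (C : k → MvPolynomial (Fin 6) k)) s t
      = C (minor3 V s t) := by
    intro s t
    fin_cases s <;> fin_cases t <;>
      simp [minor3, Matrix.map_apply]
  -- the minors of N as linear combinations of the minors of M
  have hkey : ∀ t, minorDel N t = ∑ s, (U.det * minor3 V s t) • minorDel M s := by
    intro t
    rw [hNdef, key_minor, hdet, Finset.mul_sum]
    refine Finset.sum_congr rfl fun s _ => ?_
    rw [hm3, MvPolynomial.smul_eq_C_mul, map_mul]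
    ring
  have hmem : ∀ t, minorDel N t ∈ Submodule.span k (Set.range (minorDel M)) := by
    intro t
    rw [hkey]
    exact Submodule.sum_mem _ fun s _ =>
      Submodule.smul_mem _ _ (Submodule.subset_span ⟨s, rfl⟩)
  have hUne : U.det ≠ 0 := hU.ne_zero
  have hne : ∀ t, minorDel N t ≠ 0 := by
    intro t h0
    rw [hkey] at h0
    have hcoef := (Fintype.linearIndependent_iff.mp hli) _ h0
    have hm0 : ∀ s, minor3 V s t = 0 := by
      intro s
      have := hcoef s
      rcases mul_eq_zero.mp this with h | h
      · exact absurd h hUne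
      · exact h
    have hz : (Matrix.of fun s t => minor3 V s t).det = 0 :=
      Matrix.det_eq_zero_of_column_eq_zero t fun s => hm0 s
    rw [det_minor3] at hz
    exact pow_ne_zero 2 hV.ne_zero hz
  -- entries of N are homogeneous of degree 1
  have hNh : ∀ a b, (N a b).IsHomogeneous 1 := by
    intro a b
    have hNab : N a b = ∑ b', (∑ a', C (U a a') * M a' b') * C (V b' b) := by
      simp [hNdef, Matrix.mul_apply, Matrix.map_apply]
    rw [hNab]
    refine IsHomogeneous.sum _ _ _ fun b' _ => ?_
    have : (1 : ℕ) = 1 + 0 := rfl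
    rw [this]
    refine IsHomogeneous.mul ?_ (isHomogeneous_C _ _)
    refine IsHomogeneous.sum _ _ _ fun a' _ => ?_
    have h01 : (1 : ℕ) = 0 + 1 := rfl
    rw [h01]
    exact IsHomogeneous.mul (isHomogeneous_C _ _) (hM a' b')
  -- a nonzero homogeneous polynomial of degree 1 is not a unit
  have hnotunit : ∀ p : MvPolynomial (Fin 6) k, p.IsHomogeneous 1 → ¬ IsUnit p := by
    intro p hp hu
    have h0 : constantCoeff p = 0 := by
      have : coeff 0 p = 0 := hp.coeff_eq_zero (by simp [Finsupp.degree])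
      simpa [constantCoeff_eq] using this
    have : IsUnit (constantCoeff p) := hu.map constantCoeff
    rw [h0] at this
    exact not_isUnit_zero this
  -- main contradiction lemma
  have hcontra : ∀ (p₁ p₂ : MvPolynomial (Fin 6) k), p₁.IsHomogeneous 1 →
      p₂.IsHomogeneous 1 → ∀ t : Fin 3,
      (minorDel N t = p₁ * p₂ ∨ minorDel N t = -(p₁ * p₂)) → False := by
    intro p₁ p₂ h1 h2 t hq
    have hirrq : Irreducible (minorDel N t) := hirr _ (hmem t) (hne t)
    rcases hq with hq | hq
    · rcases hirrq.isUnit_or_isUnit hq with h | h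
      · exact hnotunit p₁ h1 h
      · exact hnotunit p₂ h2 h
    · have hq' : minorDel N t = (-p₁) * p₂ := by rw [hq]; ring
      rcases hirrq.isUnit_or_isUnit hq' with h | h
      · exact hnotunit p₁ h1 (((IsUnit.neg_iff _).mp h))
      · exact hnotunit p₂ h2 h
  intro i j h
  fin_cases i <;> fin_cases j
  · exact hcontra (N 0 2) (N 1 0) (hNh 0 2) (hNh 1 0) 1
      (Or.inr (by show N 0 0 * N 1 2 - N 0 2 * N 1 0 = _
                  rw [show N 0 0 = 0 from h]; ring))
  · exact hcontra (N 0 2) (N 1 1) (hNh 0 2) (hNh 1 1) 0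
      (Or.inr (by show N 0 1 * N 1 2 - N 0 2 * N 1 1 = _
                  rw [show N 0 1 = 0 from h]; ring))
  · exact hcontra (N 0 1) (N 1 2) (hNh 0 1) (hNh 1 2) 0
      (Or.inl (by show N 0 1 * N 1 2 - N 0 2 * N 1 1 = _
                  rw [show N 0 2 = 0 from h]; ring))
  · exact hcontra (N 0 0) (N 1 2) (hNh 0 0) (hNh 1 2) 1
      (Or.inl (by show N 0 0 * N 1 2 - N 0 2 * N 1 0 = _
                  rw [show N 1 0 = 0 from h]; ring))
  · exact hcontra (N 0 1) (N 1 2) (hNh 0 1) (hNh 1 2) 0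
      (Or.inl (by show N 0 1 * N 1 2 - N 0 2 * N 1 1 = _
                  rw [show N 1 1 = 0 from h]; ring))
  · exact hcontra (N 0 2) (N 1 1) (hNh 0 2) (hNh 1 1) 0
      (Or.inr (by show N 0 1 * N 1 2 - N 0 2 * N 1 1 = _
                  rw [show N 1 2 = 0 from h]; ring))
end
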